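/- Let Q be a hereditarily indecomposable continuum in a metric space, i.e. Q is compact and connected, and no compact connected subset K of Q is the union of two nonempty compact connected proper subsets of K. Then Q contains no non-trivial paths: every continuous map γ : [0,1] → Q is constant, so all the path-connected components of Q are singletons. -/

import Mathlib

open Set

/-- Key lemma: a continuous map from ℝ into a hereditarily indecomposable continuum Q
cannot take distinct values at two points a ≤ b. -/
lemma stmt10_aux {M : Type*} [MetricSpace M] (Q : Set M)
    (hher : ∀ K : Set M, K ⊆ Q → IsCompact K → IsConnected K →
      ¬ ∃ K₁ K₂ : Set M,
          IsCompact K₁ ∧ IsConnected K₁ ∧ IsCompact K₂ ∧ IsConnected K₂ ∧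
          K₁ ⊂ K ∧ K₂ ⊂ K ∧ K₁ ∪ K₂ = K)
    (g : ℝ → M) (hg : Continuous g) (hmem : ∀ u, g u ∈ Q)
    {a b : ℝ} (hab : a ≤ b) (hne : g a ≠ g b) : False := by
  -- last time g equals g a
  set A : Set ℝ := Icc a b ∩ g ⁻¹' {g a} with hA
  have hAne : A.Nonempty := ⟨a, ⟨le_refl a, hab⟩, rfl⟩
  have hAclosed : IsClosed A := isClosed_Icc.inter (isClosed_singleton.preimage hg)
  have hAbdd : BddAbove A := BddAbove.mono (inter_subset_left) bddAbove_Icc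
  set a' := sSup A with ha'
  have ha'A : a' ∈ A := hAclosed.csSup_mem hAne hAbdd
  have hga' : g a' = g a := ha'A.2
  have ha'Icc : a' ∈ Icc a b := ha'A.1
  have ha'b : a' < b := lt_of_le_of_ne ha'Icc.2 (fun h => hne (hga' ▸ h ▸ rfl))
  -- first time after a' that g equals g b
  set B : Set ℝ := Icc a' b ∩ g ⁻¹' {g b} with hB
  have hBne : B.Nonempty := ⟨b, ⟨ha'b.le, le_refl b⟩, rfl⟩
  have hBclosed : IsClosed B := isClosed_Icc.inter (isClosed_singleton.preimage hg)
  have hBbdd : BddBelow B := BddBelow.mono (inter_subset_left) bddBelow_Icc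
  set b' := sInf B with hb'
  have hb'B : b' ∈ B := hBclosed.csInf_mem hBne hBbdd
  have hgb' : g b' = g b := hb'B.2
  have hb'Icc : b' ∈ Icc a' b := hb'B.1
  have ha'b' : a' < b' := lt_of_le_of_ne hb'Icc.1
    (fun h => hne (hga' ▸ hgb' ▸ h ▸ rfl))
  -- values differ from g a' on (a', b], and differ from g b' on [a', b')
  have hnota : ∀ u ∈ Ioc a' b, g u ≠ g a' := by
    intro u hu h
    have : u ∈ A := ⟨⟨le_trans ha'Icc.1 hu.1.le, hu.2⟩, by simp [h, hga']⟩
    exact absurd (le_csSup hAbdd this) (not_le.mpr hu.1)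
  have hnotb : ∀ u ∈ Ico a' b', g u ≠ g b' := by
    intro u hu h
    have : u ∈ B := ⟨⟨hu.1, le_trans hu.2.le hb'Icc.2⟩, by simp [h, hgb']⟩
    exact absurd (csInf_le hBbdd this) (not_le.mpr hu.2)
  set c := (a' + b') / 2 with hc
  have hac : a' < c := by simp [hc]; linarith
  have hcb : c < b' := by simp [hc]; linarith
  set K : Set M := g '' Icc a' b' with hK
  set K₁ : Set M := g '' Icc a' c with hK₁
  set K₂ : Set M := g '' Icc c b' with hK₂
  have hKQ : K ⊆ Q := by rintro x ⟨u, _, rfl⟩; exact hmem u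
  have hKcomp : IsCompact K := isCompact_Icc.image hg
  have hKconn : IsConnected K := (isConnected_Icc ha'b'.le).image g hg.continuousOn
  refine hher K hKQ hKcomp hKconn ⟨K₁, K₂, isCompact_Icc.image hg,
    (isConnected_Icc hac.le).image g hg.continuousOn, isCompact_Icc.image hg,
    (isConnected_Icc hcb.le).image g hg.continuousOn, ?_, ?_, ?_⟩
  · refine ⟨image_mono (Icc_subset_Icc le_rfl hcb.le), fun hsub => ?_⟩
    obtain ⟨u, hu, huv⟩ := hsub ⟨b', ⟨ha'b'.le, le_rfl⟩, rfl⟩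
    exact hnotb u ⟨hu.1, lt_of_le_of_lt hu.2 hcb⟩ huv
  · refine ⟨image_mono (Icc_subset_Icc hac.le le_rfl), fun hsub => ?_⟩
    obtain ⟨u, hu, huv⟩ := hsub ⟨a', ⟨le_rfl, ha'b'.le⟩, rfl⟩
    exact hnota u ⟨lt_of_lt_of_le hac hu.1, le_trans hu.2 hb'Icc.2⟩ huv
  · rw [hK₁, hK₂, ← image_union, Icc_union_Icc_eq_Icc hac.le hcb.le]

/-- a hereditarily indecomposable continuum Q in a metric space contains no
non-trivial paths: every continuous map γ : [0,1] → Q is constant, so all path-connected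
components of Q are singletons. -/
theorem stmt10 {M : Type*} [MetricSpace M] (Q : Set M)
    (hQcomp : IsCompact Q) (hQconn : IsConnected Q)
    (hher : ∀ K : Set M, K ⊆ Q → IsCompact K → IsConnected K →
      ¬ ∃ K₁ K₂ : Set M,
          IsCompact K₁ ∧ IsConnected K₁ ∧ IsCompact K₂ ∧ IsConnected K₂ ∧
          K₁ ⊂ K ∧ K₂ ⊂ K ∧ K₁ ∪ K₂ = K) :
    ∀ γ : Set.Icc (0 : ℝ) 1 → M, Continuous γ → (∀ t, γ t ∈ Q) →
      ∀ s t : Set.Icc (0 : ℝ) 1, γ s = γ t := by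
  intro γ hγ hmem s t
  by_contra hne
  set g : ℝ → M := γ ∘ projIcc 0 1 (by norm_num) with hg
  have hgc : Continuous g := hγ.comp continuous_projIcc
  have hgs : g (s : ℝ) = γ s := by simp [hg, projIcc_val]
  have hgt : g (t : ℝ) = γ t := by simp [hg, projIcc_val]
  have hgmem : ∀ u, g u ∈ Q := fun u => hmem _
  rcases le_total (s : ℝ) (t : ℝ) with h | h
  · exact stmt10_aux Q hher g hgc hgmem h (by rw [hgs, hgt]; exact hne)
  · exact stmt10_aux Q hher g hgc hgmem h (by rw [hgs, hgt]; exact fun h' => hne h'.symm)
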